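/- Let a = (a1, a2, a3, a4) ∈ ℝ⁴, m a positive integer, and c ∈ ℝ with c ∉ {a1, a2, a3, a4}, and suppose det M_m(a,c) = 0, where M_m(a,c) has rows (m²(a1-c)-1, 1, 1, -1), (-1, m²(a2-c)+1, 1, -1), (1, -1, m²(a3-c)-1, 1), (1, -1, -1, m²(a4-c)+1). Then the kernel of M_m(a,c) is one-dimensional and is spanned by the vector ((a1-c)⁻¹, (a2-c)⁻¹, -(a3-c)⁻¹, -(a4-c)⁻¹). -/

import Mathlib

theorem stmt_4 (a1 a2 a3 a4 c : ℝ) (m : ℕ) (hm : 0 < m)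
    (h1 : c ≠ a1) (h2 : c ≠ a2) (h3 : c ≠ a3) (h4 : c ≠ a4)
    (hdet : Matrix.det
      !![(m : ℝ)^2 * (a1 - c) - 1, 1, 1, -1;
         -1, (m : ℝ)^2 * (a2 - c) + 1, 1, -1;
         1, -1, (m : ℝ)^2 * (a3 - c) - 1, 1;
         1, -1, -1, (m : ℝ)^2 * (a4 - c) + 1] = 0) :
    LinearMap.ker (Matrix.mulVecLin
      !![(m : ℝ)^2 * (a1 - c) - 1, 1, 1, -1;
         -1, (m : ℝ)^2 * (a2 - c) + 1, 1, -1;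
         1, -1, (m : ℝ)^2 * (a3 - c) - 1, 1;
         1, -1, -1, (m : ℝ)^2 * (a4 - c) + 1])
      = Submodule.span ℝ {![(a1 - c)⁻¹, (a2 - c)⁻¹, -(a3 - c)⁻¹, -(a4 - c)⁻¹]}
    ∧ Module.finrank ℝ (LinearMap.ker (Matrix.mulVecLin
      !![(m : ℝ)^2 * (a1 - c) - 1, 1, 1, -1;
         -1, (m : ℝ)^2 * (a2 - c) + 1, 1, -1;
         1, -1, (m : ℝ)^2 * (a3 - c) - 1, 1;
         1, -1, -1, (m : ℝ)^2 * (a4 - c) + 1])) = 1 := by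
  have hm0 : ((m : ℝ))^2 ≠ 0 := pow_ne_zero 2 (Nat.cast_ne_zero.mpr hm.ne')
  have d1 : a1 - c ≠ 0 := sub_ne_zero.mpr (Ne.symm h1)
  have d2 : a2 - c ≠ 0 := sub_ne_zero.mpr (Ne.symm h2)
  have d3 : a3 - c ≠ 0 := sub_ne_zero.mpr (Ne.symm h3)
  have d4 : a4 - c ≠ 0 := sub_ne_zero.mpr (Ne.symm h4)
  simp [Matrix.det_succ_row_zero, Fin.sum_univ_succ, Fin.succAbove] at hdet
  have hdet' : ((m:ℝ)^2)^3 * ((m:ℝ)^2*((a1-c)*(a2-c)*(a3-c)*(a4-c))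
      - (a2-c)*(a3-c)*(a4-c) + (a1-c)*(a3-c)*(a4-c)
      - (a1-c)*(a2-c)*(a4-c) + (a1-c)*(a2-c)*(a3-c)) = 0 := by
    linear_combination hdet
  have hS : (m:ℝ)^2*((a1-c)*(a2-c)*(a3-c)*(a4-c))
      = (a2-c)*(a3-c)*(a4-c) - (a1-c)*(a3-c)*(a4-c)
      + (a1-c)*(a2-c)*(a4-c) - (a1-c)*(a2-c)*(a3-c) := by
    rcases mul_eq_zero.mp hdet' with h | h
    · exact absurd h (pow_ne_zero 3 hm0)
    · linarith
  have hv0 : (![(a1 - c)⁻¹, (a2 - c)⁻¹, -(a3 - c)⁻¹, -(a4 - c)⁻¹] : Fin 4 → ℝ) ≠ 0 := by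
    intro h
    have := congrFun h 0
    simp at this
    exact d1 this
  have hker : LinearMap.ker (Matrix.mulVecLin
      !![(m : ℝ)^2 * (a1 - c) - 1, 1, 1, -1;
         -1, (m : ℝ)^2 * (a2 - c) + 1, 1, -1;
         1, -1, (m : ℝ)^2 * (a3 - c) - 1, 1;
         1, -1, -1, (m : ℝ)^2 * (a4 - c) + 1])
      = Submodule.span ℝ {![(a1 - c)⁻¹, (a2 - c)⁻¹, -(a3 - c)⁻¹, -(a4 - c)⁻¹]} := by
    apply le_antisymm
    · intro x hx
      rw [LinearMap.mem_ker, Matrix.mulVecLin_apply] at hx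
      have e0 := congrFun hx 0
      have e1 := congrFun hx 1
      have e2 := congrFun hx 2
      have e3 := congrFun hx 3
      simp [Matrix.mulVec, dotProduct, Fin.sum_univ_four] at e0 e1 e2 e3
      rw [Submodule.mem_span_singleton]
      refine ⟨(x 0 - x 1 - x 2 + x 3) / (m:ℝ)^2, ?_⟩
      funext i
      fin_cases i <;>
        simp only [Fin.reduceFinMk, Fin.zero_eta, Fin.mk_one, Pi.smul_apply, Matrix.cons_val_zero,
          Matrix.cons_val_one, Matrix.head_cons, Matrix.cons_val_two, Matrix.cons_val_three,
          Matrix.tail_cons, smul_eq_mul]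
      · field_simp
        linear_combination -e0
      · field_simp
        linear_combination -e1
      · field_simp
        linear_combination -e2
      · field_simp
        linear_combination -e3
    · rw [Submodule.span_le, Set.singleton_subset_iff, SetLike.mem_coe,
        LinearMap.mem_ker, Matrix.mulVecLin_apply]
      funext i
      fin_cases i <;>
      · simp [Matrix.mulVec, dotProduct, Fin.sum_univ_four]
        field_simp
        first
        | linear_combination hS
        | linear_combination -hS
  refine ⟨hker, ?_⟩
  rw [hker]
  exact finrank_span_singleton hv0
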